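/- Fix δ > 0 and λ ∈ (0,1) with λ/(1−λ) > δ. Then lim_{ε→0⁺} m̃(y(ε)) = λ/((1−λ)δ), where y(ε) = (1−ε)²/((1−ε)+δε) + ε²/(ε+(1−ε)δ) and m̃(y) = 1 + log(1 + ((λ/(1−λ) − δ)/δ)·(1−y)) / log(1/y). -/

import Mathlib

open Real Filter Topology

/-- For `δ > 0` and `λ ∈ (0,1)` with `λ/(1−λ) > δ`,
`m̃(y(ε)) → λ/((1−λ)δ)` as `ε → 0⁺`, where
`y(ε) = (1−ε)²/((1−ε)+δε) + ε²/(ε+(1−ε)δ)` and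
`m̃(y) = 1 + log(1 + ((λ/(1−λ) − δ)/δ)(1−y))/log(1/y)`. -/
theorem stmt_10 (δ lam : ℝ) (hδ : 0 < δ) (hlam : lam ∈ Set.Ioo (0:ℝ) 1)
    (hload : δ < lam / (1 - lam)) :
    Tendsto
      (fun ε : ℝ =>
        1 + log (1 + ((lam / (1 - lam) - δ) / δ) *
              (1 - ((1 - ε) ^ 2 / ((1 - ε) + δ * ε) + ε ^ 2 / (ε + (1 - ε) * δ)))) /
            log (1 / ((1 - ε) ^ 2 / ((1 - ε) + δ * ε) + ε ^ 2 / (ε + (1 - ε) * δ))))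
      (𝓝[>] (0:ℝ)) (𝓝 (lam / ((1 - lam) * δ))) := by
  obtain ⟨hl0, hl1⟩ := hlam
  have h1l : (0:ℝ) < 1 - lam := by linarith
  set c : ℝ := (lam / (1 - lam) - δ) / δ with hc
  set Y : ℝ → ℝ := fun ε => (1 - ε) ^ 2 / ((1 - ε) + δ * ε) + ε ^ 2 / (ε + (1 - ε) * δ)
    with hY
  -- derivative facts
  have hF : HasDerivAt (fun x : ℝ => log (1 + c * x)) c 0 := by
    have h1 : HasDerivAt (fun x : ℝ => 1 + c * x) c 0 := by
      simpa using ((hasDerivAt_id (0:ℝ)).const_mul c).const_add 1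
    have := h1.log (by norm_num)
    simpa using this
  have hG : HasDerivAt (fun x : ℝ => -log (1 - x)) 1 0 := by
    have h1 : HasDerivAt (fun x : ℝ => 1 - x) (-1) 0 := by
      simpa using (hasDerivAt_id (0:ℝ)).const_sub 1
    have := (h1.log (by norm_num)).neg
    exact this.congr_deriv (by norm_num)
  -- slope limits
  have hFs : Tendsto (fun u : ℝ => log (1 + c * u) / u) (𝓝[≠] (0:ℝ)) (𝓝 c) := by
    have h := hasDerivAt_iff_tendsto_slope.mp hF
    refine h.congr fun u => ?_
    simp [slope_def_field]
  have hGs : Tendsto (fun u : ℝ => -log (1 - u) / u) (𝓝[≠] (0:ℝ)) (𝓝 1) := by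
    have h := hasDerivAt_iff_tendsto_slope.mp hG
    refine h.congr fun u => ?_
    simp [slope_def_field]
  -- ratio limit
  have hratio : Tendsto (fun u : ℝ => log (1 + c * u) / (-log (1 - u)))
      (𝓝[≠] (0:ℝ)) (𝓝 c) := by
    have h := hFs.div hGs one_ne_zero
    rw [div_one] at h
    refine h.congr' ?_
    filter_upwards [self_mem_nhdsWithin] with u hu
    simp only [Pi.div_apply]
    rw [div_div_div_comm, div_self (by simpa using hu), div_one]
  -- Y tends to 1
  have hYc : ContinuousAt Y 0 := by
    apply ContinuousAt.add
    · exact ContinuousAt.div (by fun_prop) (by fun_prop) (by norm_num)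
    · exact ContinuousAt.div (by fun_prop) (by fun_prop) (by simpa using hδ.ne')
  have hY0 : Y 0 = 1 := by simp [hY, hδ.ne']
  have hYt : Tendsto Y (𝓝[>] (0:ℝ)) (𝓝 1) := by
    have h2 : Tendsto Y (𝓝[>] (0:ℝ)) (𝓝 (Y 0)) :=
      hYc.tendsto.mono_left nhdsWithin_le_nhds
    rwa [hY0] at h2
  -- eventually Y ε < 1
  have hev : ∀ᶠ ε in 𝓝[>] (0:ℝ), Y ε < 1 := by
    filter_upwards [Ioo_mem_nhdsGT_of_mem (by norm_num : (0:ℝ) ∈ Set.Ico 0 1)]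
      with ε hε
    obtain ⟨hε0, hε1⟩ := hε
    have d1 : 0 < (1 - ε) + δ * ε := by nlinarith
    have d2 : 0 < ε + (1 - ε) * δ := by nlinarith
    have t1 : (1 - ε) ^ 2 / ((1 - ε) + δ * ε) < 1 - ε := by
      rw [div_lt_iff₀ d1]; nlinarith [mul_pos (mul_pos hδ hε0) (sub_pos.mpr hε1)]
    have t2 : ε ^ 2 / (ε + (1 - ε) * δ) < ε := by
      rw [div_lt_iff₀ d2]; nlinarith [mul_pos (mul_pos hδ hε0) (sub_pos.mpr hε1)]
    have : Y ε = (1 - ε) ^ 2 / ((1 - ε) + δ * ε) + ε ^ 2 / (ε + (1 - ε) * δ) := rfl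
    rw [this]; linarith
  -- 1 - Y tends to 0 within {0}ᶜ
  have hU : Tendsto (fun ε => 1 - Y ε) (𝓝[>] (0:ℝ)) (𝓝[≠] (0:ℝ)) := by
    rw [tendsto_nhdsWithin_iff]
    constructor
    · have h3 : Tendsto (fun ε => 1 - Y ε) (𝓝[>] (0:ℝ)) (𝓝 (1 - 1)) :=
        (tendsto_const_nhds (x := (1:ℝ))).sub hYt
      simpa using h3
    · filter_upwards [hev] with ε h
      simpa [sub_ne_zero] using (ne_of_lt h).symm
  have hcomp := hratio.comp hU
  have hfin := hcomp.const_add 1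
  have hval : lam / ((1 - lam) * δ) = 1 + c := by
    rw [hc]; field_simp; ring
  rw [hval]
  refine hfin.congr fun ε => ?_
  simp only [Function.comp, hY]
  rw [sub_sub_cancel, one_div, Real.log_inv]
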